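/- With the circle setup and for n ≥ 2, let X(n) be the subspace of (S¹)^n × [0, c]^n of tuples ((ζ_j)_j, (φ_j)_j) with π(ζ_{j+1 mod n}) = π(ζ_j) + φ̄_j for all j and φ_0 + … + φ_{n−1} = c. Define F : X(n) × [0,1] → X(n) by F(((ζ_j)_j, (φ_j)_j), t) = ((ζ_j + (t·φ_j/2)‾)_j, ((1 − t/2)·φ_j + (t/2)·φ_{j+1 mod n})_j). Then: (i) F is well defined (its values lie in X(n)) and continuous, and F(·, 0) is the identity; (ii) every time-slice F(·, t) commutes with simultaneous translation of all ζ_j by a fixed element of S¹, with the cyclic shift of indices applied simultaneously to the ζ_j and φ_j, and with translation of each individual ζ_j by elements of ker π; (iii) writing f := F(·, 1), for every point of X(n) whose set Z = {j : φ_j = 0} of vanishing gaps is nonempty, the image point under f has strictly fewer vanishing gaps than |Z|; (iv) consequently the n-fold iterate f^n maps X(n) into the subspace X_0(n) where all φ_j > 0. -/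

import Mathlib

noncomputable section

open Set

/-- The additive circle `S¹ = ℝ/2πℤ`. -/
abbrev S1 : Type := AddCircle (2 * Real.pi)

/-- The additive circle `B = ℝ/(2π/m)ℤ`, modeling `S¹/C_m`. -/
abbrev CircB (m : ℕ) : Type := AddCircle (2 * Real.pi / m)

/-- The space `X(n)` of tuples `((ζ_j)_j, (φ_j)_j)` with `φ_j ∈ [0, c]`,
`π(ζ_{j+1}) = π(ζ_j) + φ̄_j`, and `φ_0 + … + φ_{n−1} = c` (where `c = 2π/m`). -/
def Xn (m n : ℕ) [NeZero n] (pr : S1 → CircB m) :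
    Set ((Fin n → S1) × (Fin n → ℝ)) :=
  {x | (∀ j, x.2 j ∈ Icc 0 (2 * Real.pi / m)) ∧
    (∀ j, pr (x.1 (j + 1)) = pr (x.1 j) + ((x.2 j : ℝ) : CircB m)) ∧
    ∑ j, x.2 j = 2 * Real.pi / m}

/-- The nudging homotopy
`F(((ζ_j)_j, (φ_j)_j), t) = ((ζ_j + (t·φ_j/2)‾)_j, ((1 − t/2)·φ_j + (t/2)·φ_{j+1})_j)`. -/
def Fmap (n : ℕ) [NeZero n] :
    (((Fin n → S1) × (Fin n → ℝ)) × ℝ) → (Fin n → S1) × (Fin n → ℝ) :=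
  fun p => (fun j => p.1.1 j + ((p.2 * p.1.2 j / 2 : ℝ) : S1),
    fun j => (1 - p.2 / 2) * p.1.2 j + (p.2 / 2) * p.1.2 (j + 1))

/-- `pr` is additive. -/
lemma pr_add {m : ℕ} {pr : S1 → CircB m}
    (hpr : ∀ s : ℝ, pr ((s : ℝ) : S1) = ((s : ℝ) : CircB m)) (a b : S1) :
    pr (a + b) = pr a + pr b := by
  induction a using QuotientAddGroup.induction_on with
  | H u =>
    induction b using QuotientAddGroup.induction_on with
    | H v =>
      rw [show ((u : S1) + (v : S1)) = ((u + v : ℝ) : S1) from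
        (AddCircle.coe_add (p := 2 * Real.pi) u v).symm,
        hpr (u + v), hpr u, hpr v, AddCircle.coe_add]

lemma pr_add_coe {m : ℕ} {pr : S1 → CircB m}
    (hpr : ∀ s : ℝ, pr ((s : ℝ) : S1) = ((s : ℝ) : CircB m)) (a : S1) (s : ℝ) :
    pr (a + ((s : ℝ) : S1)) = pr a + ((s : ℝ) : CircB m) := by
  rw [pr_add hpr, hpr]

/-- The nudging homotopy `F` on `X(n)`: (i) it is well defined and
continuous, with `F(·,0)` the identity; (ii) its time-slices commute with simultaneous
translations, with the cyclic shift of indices, and with individual translations by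
elements of `ker π`; (iii) `f = F(·,1)` strictly decreases the number of vanishing gaps
whenever that number is positive; (iv) hence the `n`-fold iterate of `f` maps `X(n)` into
the subspace where all gaps are positive. -/
theorem stmt_8 (m n : ℕ) (hm : 1 ≤ m) (hn : 2 ≤ n) [NeZero n]
    (pr : S1 → CircB m) (hpr : ∀ s : ℝ, pr ((s : ℝ) : S1) = ((s : ℝ) : CircB m)) :
    -- (i)
    ((∀ t ∈ Icc (0 : ℝ) 1,
        Set.MapsTo (fun x => Fmap n (x, t)) (Xn m n pr) (Xn m n pr)) ∧
      ContinuousOn (Fmap n) ((Xn m n pr) ×ˢ Icc (0 : ℝ) 1) ∧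
      (∀ x ∈ Xn m n pr, Fmap n (x, 0) = x)) ∧
    -- (ii)
    (∀ t ∈ Icc (0 : ℝ) 1,
      (∀ a : S1,
        Set.MapsTo (fun x : (Fin n → S1) × (Fin n → ℝ) => (fun j => x.1 j + a, x.2))
          (Xn m n pr) (Xn m n pr) ∧
        ∀ x ∈ Xn m n pr,
          Fmap n (((fun j => x.1 j + a, x.2) : (Fin n → S1) × (Fin n → ℝ)), t) =
            (fun j => (Fmap n (x, t)).1 j + a, (Fmap n (x, t)).2)) ∧
      (Set.MapsTo (fun x : (Fin n → S1) × (Fin n → ℝ) =>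
          ((fun j => x.1 (j - 1), fun j => x.2 (j - 1)) : (Fin n → S1) × (Fin n → ℝ)))
          (Xn m n pr) (Xn m n pr) ∧
        ∀ x ∈ Xn m n pr,
          Fmap n (((fun j => x.1 (j - 1), fun j => x.2 (j - 1)) :
              (Fin n → S1) × (Fin n → ℝ)), t) =
            (fun j => (Fmap n (x, t)).1 (j - 1), fun j => (Fmap n (x, t)).2 (j - 1))) ∧
      (∀ k : Fin n → S1, (∀ j, pr (k j) = 0) →
        Set.MapsTo (fun x : (Fin n → S1) × (Fin n → ℝ) => (fun j => x.1 j + k j, x.2))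
          (Xn m n pr) (Xn m n pr) ∧
        ∀ x ∈ Xn m n pr,
          Fmap n (((fun j => x.1 j + k j, x.2) : (Fin n → S1) × (Fin n → ℝ)), t) =
            (fun j => (Fmap n (x, t)).1 j + k j, (Fmap n (x, t)).2))) ∧
    -- (iii)
    (∀ x ∈ Xn m n pr, ({j : Fin n | x.2 j = 0}).Nonempty →
      ({j : Fin n | (Fmap n (x, 1)).2 j = 0}).ncard < ({j : Fin n | x.2 j = 0}).ncard) ∧
    -- (iv)
    (∀ x ∈ Xn m n pr,
      (fun y => Fmap n (y, 1))^[n] x ∈ Xn m n pr ∧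
      ∀ j, 0 < ((fun y => Fmap n (y, 1))^[n] x).2 j) := by
  have hc : 0 < 2 * Real.pi / m := by
    apply div_pos (by positivity)
    exact_mod_cast Nat.lt_of_lt_of_le Nat.zero_lt_one hm
  -- shift sum lemmas
  have hsum_shift : ∀ f : Fin n → ℝ, ∑ j, f (j + 1) = ∑ j, f j := fun f =>
    Fintype.sum_equiv (Equiv.addRight 1) _ _ (fun _ => rfl)
  have hsum_shift' : ∀ f : Fin n → ℝ, ∑ j, f (j - 1) = ∑ j, f j := fun f =>
    Fintype.sum_equiv (Equiv.subRight 1) _ _ (fun _ => rfl)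
  -- (i) : MapsTo
  have hmaps : ∀ t ∈ Icc (0 : ℝ) 1,
      Set.MapsTo (fun x => Fmap n (x, t)) (Xn m n pr) (Xn m n pr) := by
    rintro t ⟨ht0, ht1⟩ x ⟨h1, h2, h3⟩
    refine ⟨fun j => ?_, fun j => ?_, ?_⟩
    · obtain ⟨ha, hb⟩ := h1 j
      obtain ⟨ha', hb'⟩ := h1 (j + 1)
      constructor
      · have : 0 ≤ (1 - t / 2) * x.2 j := by nlinarith
        have : 0 ≤ (t / 2) * x.2 (j + 1) := by nlinarith
        simp only [Fmap]; nlinarith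
      · simp only [Fmap]; nlinarith
    · show pr (x.1 (j + 1) + _) = pr (x.1 j + _) + _
      simp only [Fmap]
      rw [pr_add_coe hpr, pr_add_coe hpr, h2 j, add_assoc, add_assoc,
        ← AddCircle.coe_add, ← AddCircle.coe_add]
      congr 2
      ring
    · simp only [Fmap]
      rw [Finset.sum_add_distrib, ← Finset.mul_sum, ← Finset.mul_sum,
        hsum_shift x.2, h3]
      ring
  -- continuity
  have hcont : Continuous (Fmap n) := by
    refine Continuous.prodMk (continuous_pi fun j => ?_) (continuous_pi fun j => ?_)
    · have h1 : Continuous fun p : ((Fin n → S1) × (Fin n → ℝ)) × ℝ => p.1.1 j :=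
        (continuous_apply j).comp (continuous_fst.comp continuous_fst)
      have h2 : Continuous fun p : ((Fin n → S1) × (Fin n → ℝ)) × ℝ =>
          (p.2 * p.1.2 j / 2 : ℝ) := by fun_prop
      exact h1.add ((AddCircle.continuous_mk' _).comp h2)
    · fun_prop
  -- F(·,0) = id
  have hF0 : ∀ x ∈ Xn m n pr, Fmap n (x, 0) = x := by
    intro x hx
    refine Prod.ext (funext fun j => ?_) (funext fun j => ?_) <;> simp [Fmap]
  -- key ring identity in Fin n
  have hfin : ∀ j : Fin n, j + 1 - 1 = j - 1 + 1 := fun j => by abel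
  -- (iii) core facts
  have hZsub : ∀ x ∈ Xn m n pr, ∀ j : Fin n,
      (Fmap n (x, 1)).2 j = 0 ↔ (x.2 j = 0 ∧ x.2 (j + 1) = 0) := by
    rintro x ⟨h1, h2, h3⟩ j
    have e : (Fmap n (x, 1)).2 j = (1 - 1 / 2) * x.2 j + (1 / 2) * x.2 (j + 1) := rfl
    rw [e]
    constructor
    · intro h
      have ha := (h1 j).1
      have hb := (h1 (j + 1)).1
      have := (add_eq_zero_iff_of_nonneg (by linarith) (by linarith)).1 h
      constructor <;> nlinarith [this.1, this.2]
    · rintro ⟨ha, hb⟩; rw [ha, hb]; ring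
  have hZne : ∀ x ∈ Xn m n pr, {j : Fin n | x.2 j = 0} ≠ univ := by
    rintro x ⟨h1, h2, h3⟩ h
    have : ∀ j, x.2 j = 0 := fun j => by
      have : j ∈ {j : Fin n | x.2 j = 0} := h ▸ mem_univ j
      exact this
    rw [Finset.sum_congr rfl (fun j _ => this j), Finset.sum_const, smul_zero] at h3
    linarith
  have hbound : ∀ x ∈ Xn m n pr, ({j : Fin n | x.2 j = 0}).Nonempty →
      ∃ j, x.2 j = 0 ∧ x.2 (j + 1) ≠ 0 := by
    intro x hx ⟨j₀, hj₀⟩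
    by_contra hcon
    push_neg at hcon
    have step : ∀ j : Fin n, x.2 j = 0 → x.2 (j + 1) = 0 := fun j hj => hcon j hj
    open Fin.NatCast in
    have hall : ∀ k : ℕ, x.2 (j₀ + (k : Fin n)) = 0 := by
      intro k
      induction k with
      | zero => simpa using hj₀
      | succ k ih =>
        have e : j₀ + ((k + 1 : ℕ) : Fin n) = (j₀ + (k : Fin n)) + 1 := by
          push_cast; abel
        rw [e]; exact step _ ih
    apply hZne x hx
    ext i
    simp only [mem_setOf_eq, mem_univ, iff_true]
    have := hall (i - j₀).val
    rwa [Fin.cast_val_eq_self, add_sub_cancel] at this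
  have hiii : ∀ x ∈ Xn m n pr, ({j : Fin n | x.2 j = 0}).Nonempty →
      ({j : Fin n | (Fmap n (x, 1)).2 j = 0}).ncard < ({j : Fin n | x.2 j = 0}).ncard := by
    intro x hx hne
    apply Set.ncard_lt_ncard _ (Set.toFinite _)
    obtain ⟨j, hj0, hj1⟩ := hbound x hx hne
    refine ⟨fun i hi => ((hZsub x hx i).1 hi).1, fun hsub => ?_⟩
    have : (Fmap n (x, 1)).2 j = 0 := hsub hj0
    exact hj1 ((hZsub x hx j).1 this).2
  refine ⟨⟨hmaps, hcont.continuousOn, hF0⟩, ?_, hiii, ?_⟩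
  · -- (ii)
    rintro t ht
    refine ⟨fun a => ⟨?_, ?_⟩, ⟨?_, ?_⟩, fun k hk => ⟨?_, ?_⟩⟩
    · rintro x ⟨h1, h2, h3⟩
      refine ⟨h1, fun j => ?_, h3⟩
      show pr (x.1 (j + 1) + a) = pr (x.1 j + a) + _
      rw [pr_add hpr, pr_add hpr, h2 j]
      abel
    · intro x hx
      refine Prod.ext (funext fun j => ?_) rfl
      show (x.1 j + a) + _ = (x.1 j + _) + a
      exact add_right_comm _ _ _
    · rintro x ⟨h1, h2, h3⟩
      refine ⟨fun j => h1 _, fun j => ?_, by rw [hsum_shift' x.2]; exact h3⟩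
      show pr (x.1 (j + 1 - 1)) = pr (x.1 (j - 1)) + _
      rw [hfin j]
      exact h2 (j - 1)
    · intro x hx
      refine Prod.ext (funext fun j => rfl) (funext fun j => ?_)
      show (1 - t / 2) * x.2 (j - 1) + (t / 2) * x.2 (j + 1 - 1) = _
      rw [hfin j]; rfl
    · rintro x ⟨h1, h2, h3⟩
      refine ⟨h1, fun j => ?_, h3⟩
      show pr (x.1 (j + 1) + k (j + 1)) = pr (x.1 j + k j) + _
      rw [pr_add hpr, pr_add hpr, hk (j + 1), hk j, add_zero, add_zero, h2 j]
    · intro x hx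
      refine Prod.ext (funext fun j => ?_) rfl
      show (x.1 j + k j) + _ = (x.1 j + _) + k j
      exact add_right_comm _ _ _
  · -- (iv)
    intro x hx
    set f : (Fin n → S1) × (Fin n → ℝ) → (Fin n → S1) × (Fin n → ℝ) :=
      fun y => Fmap n (y, 1) with hf
    have hf1 : (1 : ℝ) ∈ Icc (0 : ℝ) 1 := ⟨zero_le_one, le_refl 1⟩
    have key : ∀ k : ℕ, f^[k] x ∈ Xn m n pr ∧
        ({j : Fin n | (f^[k] x).2 j = 0}).ncard ≤ n - 1 - k := by
      intro k
      induction k with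
      | zero =>
        refine ⟨by simpa using hx, ?_⟩
        have hlt : ({j : Fin n | x.2 j = 0}).ncard < n := by
          have : ({j : Fin n | x.2 j = 0}).ncard < (univ : Set (Fin n)).ncard :=
            Set.ncard_lt_ncard ((ssubset_univ_iff).2 (hZne x hx)) (Set.toFinite _)
          simpa [Set.ncard_univ] using this
        simpa using Nat.le_sub_one_of_lt hlt
      | succ k ih =>
        obtain ⟨ihm, ihc⟩ := ih
        have hmem : f^[k + 1] x ∈ Xn m n pr := by
          rw [Function.iterate_succ_apply']
          exact hmaps 1 hf1 ihm
        refine ⟨hmem, ?_⟩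
        rcases eq_empty_or_nonempty {j : Fin n | (f^[k] x).2 j = 0} with he | hne
        · have : {j : Fin n | (f^[k + 1] x).2 j = 0} = ∅ := by
            rw [Function.iterate_succ_apply']
            refine eq_empty_of_subset_empty (fun i hi => ?_)
            rw [← he]
            exact ((hZsub _ ihm i).1 hi).1
          rw [this, Set.ncard_empty]
          exact Nat.zero_le _
        · have hlt : ({j : Fin n | (f^[k + 1] x).2 j = 0}).ncard <
              ({j : Fin n | (f^[k] x).2 j = 0}).ncard := by
            rw [Function.iterate_succ_apply']
            exact hiii _ ihm hne
          omega
    obtain ⟨hmem, hcard⟩ := key n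
    have hempty : {j : Fin n | (f^[n] x).2 j = 0} = ∅ := by
      have : ({j : Fin n | (f^[n] x).2 j = 0}).ncard = 0 := by omega
      exact (Set.ncard_eq_zero (Set.toFinite _)).1 this
    refine ⟨hmem, fun j => ?_⟩
    obtain ⟨h1, -, -⟩ := hmem
    have hj0 : (f^[n] x).2 j ≠ 0 := by
      intro h
      exact absurd (hempty ▸ (h : j ∈ {j | (f^[n] x).2 j = 0})) (notMem_empty j)
    exact lt_of_le_of_ne (h1 j).1 (Ne.symm hj0)

end
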